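/- Let a, b ∈ SL(2,ℂ) with tr(a) = tr(b) and tr(ab) = 1. Then for every integer k, a·b·a^k·b·a = −b^(k−2); in particular (the case k = 0), a·b²·a = −b^(−2). -/

import Mathlib

/-- The trace of an element of SL(2,ℂ). -/
noncomputable def trSL (A : Matrix.SpecialLinearGroup (Fin 2) ℂ) : ℂ :=
  Matrix.trace (A : Matrix (Fin 2) (Fin 2) ℂ)

private abbrev SL2 := Matrix.SpecialLinearGroup (Fin 2) ℂ
private abbrev M2 := Matrix (Fin 2) (Fin 2) ℂ

private lemma ch (g : SL2) : (g : M2) * (g : M2) = trSL g • (g : M2) - 1 := by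
  have hdet : Matrix.det (g : M2) = 1 := g.2
  rw [Matrix.det_fin_two] at hdet
  ext i j
  fin_cases i <;> fin_cases j <;>
    simp [trSL, Matrix.mul_apply, Fin.sum_univ_two, Matrix.trace_fin_two, Matrix.one_apply] <;>
    first
      | linear_combination -hdet
      | linear_combination -2*hdet
      | linear_combination hdet
      | ring

private lemma zpow_rec (g : SL2) (k : ℤ) :
    ((g ^ (k + 1) : SL2) : M2) = trSL g • ((g ^ k : SL2) : M2) - ((g ^ (k - 1) : SL2) : M2) := by
  have h1 : g ^ (k + 1) = (g * g) * g ^ (k - 1) := by group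
  have h2 : g * g ^ (k - 1) = g ^ k := by group
  rw [h1, Matrix.SpecialLinearGroup.coe_mul, Matrix.SpecialLinearGroup.coe_mul, ch, sub_mul,
    Matrix.smul_mul, ← Matrix.SpecialLinearGroup.coe_mul, h2, one_mul]

/-- Lemma 4.1: if `a, b ∈ SL(2,ℂ)` have equal traces and `tr(ab) = 1`, then
`a b a^k b a = -b^(k-2)` for every `k ∈ ℤ`; in particular `a b² a = -b⁻²`. -/
theorem aba_pow_formula
    (a b : Matrix.SpecialLinearGroup (Fin 2) ℂ)
    (htr : trSL a = trSL b) (hab : trSL (a * b) = 1) :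
    (∀ k : ℤ,
      ((a * b * a ^ k * b * a : Matrix.SpecialLinearGroup (Fin 2) ℂ) :
          Matrix (Fin 2) (Fin 2) ℂ) =
        -((b ^ (k - 2) : Matrix.SpecialLinearGroup (Fin 2) ℂ) :
            Matrix (Fin 2) (Fin 2) ℂ)) ∧
    ((a * b ^ 2 * a : Matrix.SpecialLinearGroup (Fin 2) ℂ) :
        Matrix (Fin 2) (Fin 2) ℂ) =
      -((b ^ (-2 : ℤ) : Matrix.SpecialLinearGroup (Fin 2) ℂ) :
          Matrix (Fin 2) (Fin 2) ℂ) := by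
  set s : ℂ := trSL b with hs
  set A : M2 := (a : M2) with hAdef
  set B : M2 := (b : M2) with hBdef
  have hA : A * A = s • A - 1 := by rw [hAdef, ch a, htr]
  have hch_ab : (A * B) * (A * B) = (A * B) - 1 := by
    have := ch (a * b)
    rw [hab, one_smul, Matrix.SpecialLinearGroup.coe_mul] at this
    exact this
  have hab3 : A * B * (A * B) * (A * B) = -1 := by
    rw [hch_ab, sub_mul, hch_ab]
    noncomm_ring
  have htr_aba : trSL (a * b * a) = 0 := by
    have h1 : trSL (a * b * a) = Matrix.trace (A * A * B) := by
      simp only [trSL, Matrix.SpecialLinearGroup.coe_mul]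
      rw [Matrix.trace_mul_comm (A * B) A, ← mul_assoc]
    rw [h1, hA, sub_mul, one_mul, Matrix.smul_mul, Matrix.trace_sub, Matrix.trace_smul]
    have h2 : Matrix.trace (A * B) = 1 := by
      rw [← Matrix.SpecialLinearGroup.coe_mul]; exact hab
    rw [h2]
    simp [hs, trSL, hBdef]
  have haba2 : (A * B * A) * (A * B * A) = -1 := by
    have := ch (a * b * a)
    rw [htr_aba, zero_smul, zero_sub] at this
    simpa [Matrix.SpecialLinearGroup.coe_mul, mul_assoc] using this
  set P : ℤ → Prop := fun k =>
    A * B * ((a ^ k : SL2) : M2) * B * A = -((b ^ (k - 2) : SL2) : M2) with hP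
  have hP1 : P 1 := by
    have hinv : B * ((b⁻¹ : SL2) : M2) = 1 := by
      rw [← Matrix.SpecialLinearGroup.coe_mul, mul_inv_cancel]
      simp
    have h6 : A * B * A * B * A * B = -1 := by
      rw [show A * B * A * B * A * B = A * B * (A * B) * (A * B) by noncomm_ring, hab3]
    have h5 : A * B * A * B * A = -((b⁻¹ : SL2) : M2) := by
      calc A * B * A * B * A = A * B * A * B * A * (B * ((b⁻¹ : SL2) : M2)) := by
            rw [hinv, mul_one]
        _ = (A * B * A * B * A * B) * ((b⁻¹ : SL2) : M2) := by noncomm_ring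
        _ = -((b⁻¹ : SL2) : M2) := by rw [h6]; noncomm_ring
    simpa [hP, zpow_one, show (1 : ℤ) - 2 = -1 by ring, zpow_neg_one] using h5
  have hP2 : P 2 := by
    have ha2 : ((a ^ (2 : ℤ) : SL2) : M2) = A * A := by
      rw [show (2 : ℤ) = ((2 : ℕ) : ℤ) by norm_num, zpow_natCast, pow_two,
        Matrix.SpecialLinearGroup.coe_mul]
    simp only [hP]
    rw [ha2, show (2 : ℤ) - 2 = 0 by ring, zpow_zero,
      show A * B * (A * A) * B * A = (A * B * A) * (A * B * A) by noncomm_ring, haba2]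
    simp
  have expand : ∀ X Y : M2, A * B * (s • X - Y) * B * A
      = s • (A * B * X * B * A) - A * B * Y * B * A := by
    intro X Y
    simp only [mul_sub, sub_mul, Matrix.mul_smul, Matrix.smul_mul]
  have hstepF : ∀ k : ℤ, P (k - 1) → P k → P (k + 1) := by
    intro k h1 h2
    simp only [hP] at h1 h2 ⊢
    rw [zpow_rec a k, htr, expand, h1, h2,
      show (k + 1) - 2 = (k - 2) + 1 by ring, zpow_rec b (k - 2), ← hs,
      show k - 2 - 1 = (k - 1) - 2 by ring]
    simp only [smul_neg]
    abel
  have hstepB : ∀ k : ℤ, P k → P (k + 1) → P (k - 1) := by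
    intro k h1 h2
    simp only [hP] at h1 h2 ⊢
    have ha : ((a ^ (k - 1) : SL2) : M2) = s • ((a ^ k : SL2) : M2) - ((a ^ (k + 1) : SL2) : M2) := by
      rw [zpow_rec a k, htr]; abel
    have hb : ((b ^ (k - 1 - 2) : SL2) : M2)
        = s • ((b ^ (k - 2) : SL2) : M2) - ((b ^ (k + 1 - 2) : SL2) : M2) := by
      rw [show (k + 1) - 2 = (k - 2) + 1 by ring, zpow_rec b (k - 2), ← hs,
        show k - 2 - 1 = k - 1 - 2 by ring]
      abel
    rw [ha, hb, expand, h1, h2]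
    simp only [smul_neg]
    abel
  have hPall : ∀ k : ℤ, P k := by
    have hQ : ∀ k : ℤ, P k ∧ P (k + 1) := by
      intro k
      induction k using Int.induction_on with
      | zero =>
        refine ⟨?_, hP1⟩
        have := hstepB 1 hP1 (by simpa using hP2)
        simpa using this
      | succ n ih =>
        exact ⟨ih.2, hstepF (n + 1) (by simpa using ih.1) ih.2⟩
      | pred n ih =>
        refine ⟨?_, by simpa using ih.1⟩
        have := hstepB (-n) ih.1 (by simpa using ih.2)
        simpa [sub_eq_add_neg, add_comm] using this
    exact fun k => (hQ k).1
  constructor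
  · intro k
    have := hPall k
    simp only [hP] at this
    simpa [Matrix.SpecialLinearGroup.coe_mul, mul_assoc] using this
  · have := hPall 0
    simp only [hP] at this
    simp only [zpow_zero, Matrix.SpecialLinearGroup.coe_one,
      show (0 : ℤ) - 2 = -2 by ring] at this
    have h2 : ((a * b ^ 2 * a : SL2) : M2) = A * B * (1 : M2) * B * A := by
      simp [Matrix.SpecialLinearGroup.coe_mul, pow_two, mul_assoc]
      rfl
    rw [h2, this]
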